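/- Let X be a locally compact Hausdorff space and f a continuous function on X. Then the set (1+|f|²)^{1/2}·C_c(X) = {(1+|f|²)^{1/2}·g : g ∈ C_c(X)} is dense in C₀(X) with respect to the uniform norm. -/
import Mathlib


open ZeroAtInfty

/-- For a locally compact Hausdorff space `X` and continuous `f` on `X`, the set
`(1+|f|²)^{1/2}·C_c(X)` is dense in `C₀(X)` in the uniform norm. -/
theorem stmt_1 {X : Type*} [TopologicalSpace X] [LocallyCompactSpace X] [T2Space X]
    (f : C(X, ℂ)) :
    Dense {h : C₀(X, ℂ) | ∃ g : C(X, ℂ), HasCompactSupport g ∧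
      ∀ x, h x = (Real.sqrt (1 + ‖f x‖ ^ 2) : ℂ) * g x} := by
  have hsqrt_pos : ∀ x, (0 : ℝ) < Real.sqrt (1 + ‖f x‖ ^ 2) := fun x =>
    Real.sqrt_pos.mpr (by positivity)
  have hsqrt_cont : Continuous fun x => (Real.sqrt (1 + ‖f x‖ ^ 2) : ℂ) := by
    exact Complex.continuous_ofReal.comp <| Real.continuous_sqrt.comp <|
      continuous_const.add ((f.continuous.norm).pow 2)
  rw [Metric.dense_iff]
  intro h ε hε
  -- find compact set outside of which ‖h x‖ < ε/2
  have hz : Filter.Tendsto h (Filter.cocompact X) (nhds 0) := zero_at_infty h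
  have hmem : h ⁻¹' Metric.ball 0 (ε / 2) ∈ Filter.cocompact X :=
    hz (Metric.ball_mem_nhds 0 (by linarith))
  obtain ⟨K, hK, hKsub⟩ := Filter.mem_cocompact.mp hmem
  obtain ⟨φ, hφ1, -, hφsupp, hφicc⟩ :=
    exists_continuous_one_zero_of_isCompact hK isClosed_empty (Set.disjoint_empty _)
  -- the compactly supported approximant
  set c : C(X, ℂ) := ⟨fun x => (φ x : ℂ) * h x,
    (Complex.continuous_ofReal.comp φ.continuous).mul h.continuous⟩ with hc_def
  have hc_supp : HasCompactSupport c := by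
    apply hφsupp.mono
    intro x hx
    simp only [hc_def, ContinuousMap.coe_mk, Function.mem_support] at hx ⊢
    intro h0
    apply hx
    rw [h0]
    simp
  refine ⟨⟨c, hc_supp.is_zero_at_infty⟩, ?_, ?_⟩
  · -- distance bound
    rw [Metric.mem_ball, dist_comm, dist_eq_norm, ← ZeroAtInftyContinuousMap.norm_toBCF_eq_norm]
    have : ∀ x, ‖(h - ⟨c, hc_supp.is_zero_at_infty⟩ : C₀(X, ℂ)) x‖ ≤ ε / 2 := by
      intro x
      have hx : (h - ⟨c, hc_supp.is_zero_at_infty⟩ : C₀(X, ℂ)) x = (1 - (φ x : ℂ)) * h x := by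
        simp [hc_def, sub_mul]
      rw [hx]
      by_cases hxK : x ∈ K
      · have : φ x = 1 := hφ1 hxK
        simp [this]
        positivity
      · have h1 : ‖h x‖ < ε / 2 := by
          have := hKsub hxK
          simpa using this
        have h2 : ‖(1 : ℂ) - (φ x : ℂ)‖ ≤ 1 := by
          rw [← Complex.ofReal_one, ← Complex.ofReal_sub, Complex.norm_real, Real.norm_eq_abs, abs_le]
          constructor <;> [linarith [(hφicc x).2]; linarith [(hφicc x).1]]
        calc ‖((1 : ℂ) - (φ x : ℂ)) * h x‖ = ‖(1 : ℂ) - (φ x : ℂ)‖ * ‖h x‖ := norm_mul _ _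
          _ ≤ 1 * ‖h x‖ := by gcongr
          _ ≤ ε / 2 := by rw [one_mul]; exact h1.le
    exact lt_of_le_of_lt (BoundedContinuousFunction.norm_le (C := ε/2) (by positivity) |>.mpr
      (fun x => this x)) (by linarith)
  · -- membership in the set
    refine ⟨⟨fun x => c x / (Real.sqrt (1 + ‖f x‖ ^ 2) : ℂ),
      c.continuous.div hsqrt_cont fun x => by
        exact_mod_cast Complex.ofReal_ne_zero.mpr (hsqrt_pos x).ne'⟩, ?_, ?_⟩
    · apply hc_supp.mono
      intro x hx
      simp only [ContinuousMap.coe_mk, Function.mem_support] at hx ⊢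
      intro h0
      apply hx
      rw [h0, zero_div]
    · intro x
      have hne : ((Real.sqrt (1 + ‖f x‖ ^ 2) : ℝ) : ℂ) ≠ 0 :=
        Complex.ofReal_ne_zero.mpr (hsqrt_pos x).ne'
      simp only [ContinuousMap.coe_mk]
      rw [mul_div_cancel₀ _ hne]
      rfl
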